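/- For all integers n ≥ k ≥ 0, the sum, over all multisets M of size n − k with elements taken from {1, 2, ..., k}, of the product of the elements of M equals S(n,k), the Stirling number of the second kind. -/

import Mathlib

/-- The Stirling number of the second kind `S(n,k)`: the number of partitions of an
`n`-element set into exactly `k` nonempty blocks. -/
noncomputable def stirlingSecond (n k : ℕ) : ℕ :=
  Nat.card {P : Finpartition (Finset.univ : Finset (Fin n)) // P.parts.card = k}

namespace StirlingAux

open Finset

lemma sym_insert_split {x : ℕ} {s : Finset ℕ} (hx : x ∉ s) (m : ℕ) :
    ∑ M ∈ (insert x s).sym (m + 1), (M : Multiset ℕ).prod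
      = x * ∑ M ∈ (insert x s).sym m, (M : Multiset ℕ).prod
        + ∑ M ∈ s.sym (m + 1), (M : Multiset ℕ).prod := by
  classical
  have hsplit : (insert x s).sym (m + 1)
      = ((insert x s).sym m).image (Sym.cons x) ∪ s.sym (m + 1) := by
    ext M
    simp only [mem_union, mem_image, mem_sym_iff]
    constructor
    · intro hM
      by_cases hxM : x ∈ M
      · left
        refine ⟨M.erase x hxM, ?_, Sym.cons_erase hxM⟩
        intro b hb
        exact hM b ((Sym.cons_erase hxM) ▸ Sym.mem_cons_of_mem hb)
      · right
        intro b hb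
        rcases mem_insert.mp (hM b hb) with rfl | h
        · exact absurd hb hxM
        · exact h
    · rintro (⟨N, hN, rfl⟩ | hM)
      · intro b hb
        rcases Sym.mem_cons.mp hb with rfl | hb
        · exact mem_insert_self _ _
        · exact hN b hb
      · exact fun b hb => mem_insert_of_mem (hM b hb)
  have hdisj : Disjoint (((insert x s).sym m).image (Sym.cons x)) (s.sym (m + 1)) := by
    rw [Finset.disjoint_left]
    rintro M hM hM'
    obtain ⟨N, _, rfl⟩ := mem_image.mp hM
    exact hx (mem_sym_iff.mp hM' x (Sym.mem_cons_self x N))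
  rw [hsplit, sum_union hdisj, sum_image (fun M _ N _ h => (Sym.cons_inj_right x M N).mp h)]
  congr 1
  rw [mul_sum]
  apply sum_congr rfl
  intro N _
  rw [Sym.coe_cons, Multiset.prod_cons]

def stir : ℕ → ℕ → ℕ
  | 0, 0 => 1
  | 0, _+1 => 0
  | _+1, 0 => 0
  | n+1, k+1 => (k+1) * stir n (k+1) + stir n k

lemma stir_of_lt : ∀ n k, n < k → stir n k = 0
  | 0, _+1, _ => rfl
  | n+1, k+1, h => by
    show (k+1) * stir n (k+1) + stir n k = 0
    rw [stir_of_lt n (k+1) (by omega), stir_of_lt n k (by omega)]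
    simp

lemma stir_diag : ∀ n, stir n n = 1
  | 0 => rfl
  | n+1 => by
    show (n+1) * stir n (n+1) + stir n n = 1
    rw [stir_of_lt n (n+1) (by omega), stir_diag n]
    simp

lemma sym_sum_eq_stir : ∀ n k, k ≤ n →
    ∑ M ∈ (Finset.Icc 1 k).sym (n - k), (M : Multiset ℕ).prod = stir n k := by
  intro n
  induction n with
  | zero =>
    intro k hk
    interval_cases k
    simp [Finset.sym_zero]
    rfl
  | succ n ih =>
    intro k hk
    cases k with
    | zero =>
      rw [show Finset.Icc 1 0 = (∅ : Finset ℕ) by simp, Nat.sub_zero, Finset.sym_empty,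
        sum_empty]
      rfl
    | succ k =>
      have hk' : k ≤ n := by omega
      rcases eq_or_lt_of_le (Nat.succ_le_succ_iff.mp hk) with rfl | hlt
      · rw [Nat.sub_self, Finset.sym_zero, sum_singleton, stir_diag]
        rfl
      · have hicc : Finset.Icc 1 (k + 1) = insert (k + 1) (Finset.Icc 1 k) := by
          ext b; simp only [mem_Icc, mem_insert]; omega
        have hm : n + 1 - (k + 1) = (n - (k + 1)) + 1 := by omega
        have hx : (k + 1) ∉ Finset.Icc 1 k := by simp
        rw [hicc, hm, sym_insert_split hx]
        rw [← hicc]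
        rw [ih (k + 1) hlt]
        have hm2 : n - (k + 1) + 1 = n - k := by omega
        rw [hm2, ih k hk']
        rfl


variable {α : Type*} [DecidableEq α] {a : α} {s : Finset α}

def extS (ha : a ∉ s) (Q : Finpartition s) : Finpartition (insert a s) :=
  Q.extend (b := {a}) (by simp) (by simpa using ha)
    (by rw [Finset.sup_eq_union, Finset.union_comm, ← Finset.insert_eq])

lemma extS_parts (ha : a ∉ s) (Q : Finpartition s) :
    (extS ha Q).parts = insert {a} Q.parts := rfl

def insP (ha : a ∉ s) (Q : Finpartition s) (t : Finset α) (ht : t ∈ Q.parts) :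
    Finpartition (insert a s) where
  parts := insert (insert a t) (Q.parts.erase t)
  supIndep := by
    rw [supIndep_iff_pairwiseDisjoint]
    intro x hx y hy hxy
    simp only [coe_insert, Set.mem_insert_iff, mem_coe, mem_erase] at hx hy
    have key : ∀ d ∈ Q.parts, a ∉ d := fun d hd h => ha (Q.le hd h)
    simp only [Function.onFun, id]
    rcases hx with rfl | ⟨hxt, hx⟩ <;> rcases hy with rfl | ⟨hyt, hy⟩
    · exact absurd rfl hxy
    · rw [Finset.disjoint_left]
      intro b hb hb'
      rcases mem_insert.mp hb with rfl | hb
      · exact key _ hy hb'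
      · exact Finset.disjoint_left.mp (Q.disjoint (mem_coe.mpr ht) (mem_coe.mpr hy)
          (fun h => hyt h.symm)) hb hb'
    · rw [Finset.disjoint_right]
      intro b hb hb'
      rcases mem_insert.mp hb with rfl | hb
      · exact key _ hx hb'
      · exact Finset.disjoint_left.mp (Q.disjoint (mem_coe.mpr ht) (mem_coe.mpr hx)
          (fun h => hxt h.symm)) hb hb'
    · exact Q.disjoint (mem_coe.mpr hx) (mem_coe.mpr hy) hxy
  sup_parts := by
    rw [sup_insert, id]
    have h2 : t ⊔ (Q.parts.erase t).sup id = s := by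
      have := (sup_insert (b := t) (s := Q.parts.erase t) (f := id)).symm
      rw [id] at this
      rw [this, insert_erase ht, Q.sup_parts]
    rw [Finset.sup_eq_union] at h2 ⊢
    rw [Finset.insert_union, h2]
  bot_notMem := by
    simp only [bot_eq_empty, mem_insert, mem_erase, not_or]
    exact ⟨fun h => by simpa using congrArg (a ∈ ·) h.symm, fun h => Q.bot_notMem h.2⟩

lemma insP_parts (ha : a ∉ s) (Q : Finpartition s) (t : Finset α) (ht : t ∈ Q.parts) :
    (insP ha Q t ht).parts = insert (insert a t) (Q.parts.erase t) := rfl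

def res (ha : a ∉ s) (P : Finpartition (insert a s)) : Finpartition s :=
  (P.avoid {a}).copy (show (insert a s) \ {a} = s by
    rw [Finset.sdiff_singleton_eq_erase, Finset.erase_insert ha])

lemma mem_res (ha : a ∉ s) (P : Finpartition (insert a s)) {t : Finset α} :
    t ∈ (res ha P).parts ↔ ∃ d ∈ P.parts, ¬ d ⊆ {a} ∧ d \ {a} = t := by
  rw [show (res ha P).parts = (P.avoid {a}).parts from rfl, Finpartition.mem_avoid]

lemma not_mem_of_ne_part (P : Finpartition (insert a s)) {d : Finset α}
    (hd : d ∈ P.parts) (hda : d ≠ P.part a) : a ∉ d :=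
  fun h => hda (P.part_eq_of_mem hd h).symm

lemma res_parts_of_singleton (ha : a ∉ s) (P : Finpartition (insert a s))
    (h1 : P.part a = {a}) : (res ha P).parts = P.parts.erase {a} := by
  ext t
  rw [mem_res, mem_erase]
  constructor
  · rintro ⟨d, hd, hsub, rfl⟩
    have hda : d ≠ {a} := fun h => hsub (h ▸ Finset.Subset.refl _)
    have hna : a ∉ d := not_mem_of_ne_part P hd (h1 ▸ hda)
    rw [Finset.sdiff_singleton_eq_erase, Finset.erase_eq_of_notMem hna]
    exact ⟨hda, hd⟩
  · rintro ⟨hne, ht⟩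
    have hna : a ∉ t := not_mem_of_ne_part P ht (h1 ▸ hne)
    refine ⟨t, ht, ?_, ?_⟩
    · intro hsub
      rcases Finset.subset_singleton_iff.mp hsub with rfl | rfl
      · exact P.bot_notMem ht
      · exact hne rfl
    · rw [Finset.sdiff_singleton_eq_erase, Finset.erase_eq_of_notMem hna]

lemma res_parts_of_not_singleton (ha : a ∉ s) (P : Finpartition (insert a s))
    (h1 : P.part a ≠ {a}) : (res ha P).parts = P.parts.image (· \ {a}) := by
  have key : ∀ d ∈ P.parts, ¬ d ⊆ {a} := by
    intro d hd hsub
    rcases Finset.subset_singleton_iff.mp hsub with rfl | rfl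
    · exact P.bot_notMem hd
    · exact h1 (P.part_eq_of_mem hd (mem_singleton_self a))
  ext t
  rw [mem_res, mem_image]
  constructor
  · rintro ⟨d, hd, _, rfl⟩; exact ⟨d, hd, rfl⟩
  · rintro ⟨d, hd, rfl⟩; exact ⟨d, hd, key d hd, rfl⟩

lemma sdiff_injOn (P : Finpartition (insert a s)) :
    Set.InjOn (· \ ({a} : Finset α)) P.parts := by
  intro d1 h1 d2 h2 heq
  simp only [mem_coe] at h1 h2
  simp only [Finset.sdiff_singleton_eq_erase] at heq
  by_cases e1 : a ∈ d1 <;> by_cases e2 : a ∈ d2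
  · exact P.eq_of_mem_parts h1 h2 e1 e2
  · exfalso
    rw [Finset.erase_eq_of_notMem e2] at heq
    have hne : d1 ≠ d2 := fun h => e2 (h ▸ e1)
    obtain ⟨b, hb⟩ := P.nonempty_of_mem_parts h2
    have hb1 : b ∈ d1 := Finset.erase_subset a d1 (heq.symm ▸ hb : b ∈ d1.erase a)
    exact Finset.disjoint_left.mp (P.disjoint (mem_coe.mpr h1) (mem_coe.mpr h2) hne) hb1 hb
  · exfalso
    rw [Finset.erase_eq_of_notMem e1] at heq
    have hne : d2 ≠ d1 := fun h => e1 (h ▸ e2)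
    obtain ⟨b, hb⟩ := P.nonempty_of_mem_parts h1
    have hb2 : b ∈ d2 := Finset.erase_subset a d2 (heq ▸ hb : b ∈ d2.erase a)
    exact Finset.disjoint_left.mp (P.disjoint (mem_coe.mpr h2) (mem_coe.mpr h1) hne) hb2 hb
  · rw [Finset.erase_eq_of_notMem e1, Finset.erase_eq_of_notMem e2] at heq
    exact heq

lemma singleton_not_mem_parts (ha : a ∉ s) (Q : Finpartition s) : ({a} : Finset α) ∉ Q.parts :=
  fun h => ha (Q.le h (mem_singleton_self a))

lemma extS_part_a (ha : a ∉ s) (Q : Finpartition s) : (extS ha Q).part a = {a} :=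
  (extS ha Q).part_eq_of_mem (by rw [extS_parts]; exact mem_insert_self _ _)
    (mem_singleton_self a)

lemma res_extS (ha : a ∉ s) (Q : Finpartition s) : res ha (extS ha Q) = Q := by
  apply Finpartition.ext
  rw [res_parts_of_singleton ha _ (extS_part_a ha Q), extS_parts, erase_insert
    (singleton_not_mem_parts ha Q)]

lemma extS_res (ha : a ∉ s) (P : Finpartition (insert a s)) (h1 : P.part a = {a}) :
    extS ha (res ha P) = P := by
  apply Finpartition.ext
  rw [extS_parts, res_parts_of_singleton ha P h1, insert_erase (h1 ▸ P.part_mem.2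
    (mem_insert_self a s))]

lemma insP_part_a (ha : a ∉ s) (Q : Finpartition s) (t : Finset α) (ht : t ∈ Q.parts) :
    (insP ha Q t ht).part a = insert a t :=
  (insP ha Q t ht).part_eq_of_mem (by rw [insP_parts]; exact mem_insert_self _ _)
    (mem_insert_self a t)

lemma insert_ne_singleton (ha : a ∉ s) (Q : Finpartition s) {t : Finset α} (ht : t ∈ Q.parts) :
    insert a t ≠ {a} := by
  obtain ⟨b, hb⟩ := Q.nonempty_of_mem_parts ht
  intro h
  have hba : b ≠ a := fun e => ha (e ▸ Q.le ht hb)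
  have : b ∈ ({a} : Finset α) := h ▸ mem_insert_of_mem hb
  exact hba (mem_singleton.mp this)

lemma sdiff_eq_self_of_parts (ha : a ∉ s) (Q : Finpartition s) {d : Finset α}
    (hd : d ∈ Q.parts) : d \ {a} = d := by
  rw [Finset.sdiff_singleton_eq_erase, Finset.erase_eq_of_notMem (fun h => ha (Q.le hd h))]

lemma res_insP (ha : a ∉ s) (Q : Finpartition s) (t : Finset α) (ht : t ∈ Q.parts) :
    res ha (insP ha Q t ht) = Q := by
  apply Finpartition.ext
  have hat : a ∉ t := fun h => ha (Q.le ht h)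
  rw [res_parts_of_not_singleton ha _ (by rw [insP_part_a]; exact insert_ne_singleton ha Q ht),
    insP_parts, image_insert]
  have e1 : insert a t \ {a} = t := by
    rw [Finset.sdiff_singleton_eq_erase, Finset.erase_insert hat]
  have e2 : (Q.parts.erase t).image (· \ {a}) = Q.parts.erase t := by
    apply Finset.image_congr (g := id) ?_ |>.trans (image_id)
    intro d hd
    exact sdiff_eq_self_of_parts ha Q (mem_of_mem_erase hd)
  rw [e1, e2, insert_erase ht]

lemma part_sdiff_mem_res (ha : a ∉ s) (P : Finpartition (insert a s)) (h1 : P.part a ≠ {a}) :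
    P.part a \ {a} ∈ (res ha P).parts := by
  rw [res_parts_of_not_singleton ha P h1]
  exact mem_image_of_mem _ (P.part_mem.2 (mem_insert_self a s))

lemma insP_res (ha : a ∉ s) (P : Finpartition (insert a s)) (h1 : P.part a ≠ {a})
    (h2 : P.part a \ {a} ∈ (res ha P).parts) :
    insP ha (res ha P) (P.part a \ {a}) h2 = P := by
  apply Finpartition.ext
  rw [insP_parts]
  have hpa : P.part a ∈ P.parts := P.part_mem.2 (mem_insert_self a s)
  have haa : a ∈ P.part a := P.mem_part (mem_insert_self a s)
  have e1 : insert a (P.part a \ {a}) = P.part a := by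
    rw [Finset.sdiff_singleton_eq_erase, insert_erase haa]
  have e2 : (res ha P).parts.erase (P.part a \ {a}) = P.parts.erase (P.part a) := by
    ext u
    rw [mem_erase, res_parts_of_not_singleton ha P h1, mem_erase, mem_image]
    constructor
    · rintro ⟨hu, d, hd, rfl⟩
      have hdp : d ≠ P.part a := fun e => hu (e ▸ rfl)
      have : a ∉ d := not_mem_of_ne_part P hd hdp
      rw [Finset.sdiff_singleton_eq_erase, Finset.erase_eq_of_notMem this]
      exact ⟨hdp, hd⟩
    · rintro ⟨hu, hd⟩
      have : a ∉ u := not_mem_of_ne_part P hd hu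
      refine ⟨?_, u, hd, ?_⟩
      · intro h
        exact hu (sdiff_injOn P (mem_coe.mpr hd) (mem_coe.mpr hpa)
          (by show u \ {a} = P.part a \ {a}
              rw [Finset.sdiff_singleton_eq_erase a u, Finset.erase_eq_of_notMem this]; exact h))
      · rw [Finset.sdiff_singleton_eq_erase, Finset.erase_eq_of_notMem this]
  rw [e1, e2, insert_erase hpa]


lemma card_rec (ha : a ∉ s) (k : ℕ) :
    #((univ : Finset (Finpartition (insert a s))).filter fun P => #P.parts = k + 1)
      = #((univ : Finset (Finpartition s)).filter fun Q => #Q.parts = k)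
        + (k + 1) * #((univ : Finset (Finpartition s)).filter fun Q => #Q.parts = k + 1) := by
  classical
  rw [← card_filter_add_card_filter_not
    (s := (univ : Finset (Finpartition (insert a s))).filter fun P => #P.parts = k + 1)
    (p := fun P => P.part a = {a})]
  congr 1
  · refine card_bij' (fun P _ => res ha P) (fun Q _ => extS ha Q) ?_ ?_ ?_ ?_
    · intro P hP
      simp only [mem_filter, mem_univ, true_and] at hP ⊢
      obtain ⟨hk, hsing⟩ := hP
      rw [res_parts_of_singleton ha P hsing,
        card_erase_of_mem (hsing ▸ P.part_mem.2 (mem_insert_self a s)), hk]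
      omega
    · intro Q hQ
      simp only [mem_filter, mem_univ, true_and] at hQ ⊢
      refine ⟨?_, extS_part_a ha Q⟩
      rw [extS_parts, card_insert_of_notMem (singleton_not_mem_parts ha Q), hQ]
    · intro P hP
      simp only [mem_filter, mem_univ, true_and] at hP
      exact extS_res ha P hP.2
    · intro Q _
      exact res_extS ha Q
  · have hbij : #(((univ : Finset (Finpartition (insert a s))).filter
        fun P => #P.parts = k + 1).filter fun P => ¬ P.part a = {a})
      = #(((univ : Finset (Finpartition s)).filter fun Q => #Q.parts = k + 1).sigma
          fun Q => Q.parts) := by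
      refine card_bij' (fun P hP => ⟨res ha P, P.part a \ {a}⟩)
        (fun x hx => insP ha x.1 x.2 (mem_sigma.mp hx).2) ?_ ?_ ?_ ?_
      · intro P hP
        simp only [mem_filter, mem_univ, true_and] at hP
        obtain ⟨hk, hns⟩ := hP
        refine mem_sigma.mpr ⟨mem_filter.mpr ⟨mem_univ _, ?_⟩, part_sdiff_mem_res ha P hns⟩
        rw [res_parts_of_not_singleton ha P hns, card_image_of_injOn (sdiff_injOn P), hk]
      · intro x hx
        obtain ⟨hQ, ht⟩ := mem_sigma.mp hx
        simp only [mem_filter, mem_univ, true_and] at hQ ⊢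
        constructor
        · rw [insP_parts, card_insert_of_notMem
            (fun h => ha (x.1.le (mem_of_mem_erase h) (mem_insert_self a x.2))),
            card_erase_of_mem ht, hQ]
          omega
        · rw [insP_part_a]
          exact insert_ne_singleton ha x.1 ht
      · intro P hP
        simp only [mem_filter, mem_univ, true_and] at hP
        exact insP_res ha P hP.2 _
      · intro x hx
        obtain ⟨hQ, ht⟩ := mem_sigma.mp hx
        refine Sigma.ext (res_insP ha x.1 x.2 ht) (heq_of_eq ?_)
        rw [insP_part_a, Finset.sdiff_singleton_eq_erase,
          Finset.erase_insert (fun h => ha (x.1.le ht h))]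
    rw [hbij, card_sigma, sum_const_nat (m := k + 1) (fun Q hQ => (mem_filter.mp hQ).2),
      mul_comm]

lemma card_eq_stir (s : Finset α) : ∀ k,
    #((univ : Finset (Finpartition s)).filter fun P => #P.parts = k) = stir #s k := by
  classical
  induction s using Finset.induction_on with
  | empty =>
    intro k
    have hall : ∀ P : Finpartition (∅ : Finset α), P.parts = ∅ :=
      fun P => Finpartition.parts_eq_empty_iff.mpr rfl
    have huniq : ∀ P Q : Finpartition (∅ : Finset α), P = Q :=
      fun P Q => Finpartition.ext ((hall P).trans (hall Q).symm)
    cases k with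
    | zero =>
      rw [filter_true_of_mem (fun P _ => by rw [hall P]; rfl), card_univ]
      have P0 : Finpartition (∅ : Finset α) := (Finpartition.empty (Finset α)).copy bot_eq_empty
      rw [Fintype.card_eq_one_of_forall_eq (fun P => huniq P P0)]
      rfl
    | succ k =>
      rw [filter_false_of_mem (fun P _ => by rw [hall P]; simp), card_empty]
      rfl
  | @insert a t ha ih =>
    intro k
    rw [card_insert_of_notMem ha]
    cases k with
    | zero =>
      rw [filter_false_of_mem, card_empty]
      · rfl
      · intro P _
        rw [Finset.card_eq_zero, Finpartition.parts_eq_empty_iff, bot_eq_empty]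
        exact Finset.insert_ne_empty a t
    | succ k =>
      rw [card_rec ha k, ih k, ih (k + 1)]
      show _ = (k + 1) * stir #t (k + 1) + stir #t k
      omega

lemma stirlingSecond_eq_stir' (n k : ℕ) :
    Nat.card {P : Finpartition (Finset.univ : Finset (Fin n)) // P.parts.card = k}
      = stir n k := by
  rw [Nat.card_eq_fintype_card, Fintype.card_subtype]
  have := card_eq_stir (univ : Finset (Fin n)) k
  rwa [card_univ, Fintype.card_fin] at this

end StirlingAux

/-- for `n ≥ k ≥ 0`, the sum over all multisets `M` of size `n − k` with
elements in `{1, …, k}` of the product of the elements of `M` equals `S(n,k)`. -/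
theorem stmt_10 (n k : ℕ) (h : k ≤ n) :
    ∑ M ∈ (Finset.Icc 1 k).sym (n - k), (M : Multiset ℕ).prod = stirlingSecond n k := by
  rw [StirlingAux.sym_sum_eq_stir n k h, stirlingSecond]
  exact (StirlingAux.stirlingSecond_eq_stir' n k).symm
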